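/- Cumulative incidence of the terminal event following the intermediate event in the latent-time construction: for every t ≥ 0, P(T₂ ≤ t and T₁ < D₀) = ∫₀ᵗ exp{−Λ₀(s) − Λ⋆(s)} λ⋆(s) (1 − exp{−Λ₁(t,s)}) ds. -/

import Mathlib

open MeasureTheory ProbabilityTheory Filter Set

/-- Cumulative hazard `Λ(t) = ∫₀ᵗ λ(u) du`. -/
noncomputable def cumHaz (lam : ℝ → ℝ) (t : ℝ) : ℝ := ∫ u in (0:ℝ)..t, lam u

/-- Post-intermediate cumulative hazard `Λ₁(t,s) = ∫ₛᵗ λ₁(u,s) du`. -/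
noncomputable def cumHaz1 (lam1 : ℝ → ℝ → ℝ) (t s : ℝ) : ℝ := ∫ u in s..t, lam1 u s

/-- The counterfactual cumulative incidence function
`F(t) = ∫₀ᵗ e^{−Λ₀(s)−Λ⋆(s)} λ₀(s) ds + ∫₀ᵗ e^{−Λ₀(s)−Λ⋆(s)} λ⋆(s) (1 − e^{−Λ₁(t,s)}) ds`. -/
noncomputable def cif (lamS lam0 : ℝ → ℝ) (lam1 : ℝ → ℝ → ℝ) (t : ℝ) : ℝ :=
  (∫ s in (0:ℝ)..t, Real.exp (-cumHaz lam0 s - cumHaz lamS s) * lam0 s) +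
  ∫ s in (0:ℝ)..t, Real.exp (-cumHaz lam0 s - cumHaz lamS s) * lamS s *
    (1 - Real.exp (-cumHaz1 lam1 t s))

lemma clamp_continuous {lam : ℝ → ℝ} (hc : ContinuousOn lam (Set.Ici 0)) :
    Continuous (fun x => lam (max x 0)) :=
  hc.comp_continuous (continuous_id.max continuous_const) fun x => Set.mem_Ici.2 (le_max_right x 0)

lemma cumHaz_clamp_eq (lam : ℝ → ℝ) {x : ℝ} (hx : 0 ≤ x) :
    cumHaz (fun y => lam (max y 0)) x = cumHaz lam x := by
  unfold cumHaz
  refine intervalIntegral.integral_congr fun u hu => ?_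
  rw [uIcc_of_le hx] at hu
  rw [max_eq_left hu.1]

lemma cumHaz_hasDerivAt {lam : ℝ → ℝ} (hc : Continuous lam) (x : ℝ) :
    HasDerivAt (cumHaz lam) (lam x) x :=
  intervalIntegral.integral_hasDerivAt_right (hc.intervalIntegrable _ _)
    hc.stronglyMeasurable.stronglyMeasurableAtFilter hc.continuousAt

lemma cumHaz_continuous {lam : ℝ → ℝ} (hc : Continuous lam) : Continuous (cumHaz lam) :=
  continuous_iff_continuousAt.2 fun x => (cumHaz_hasDerivAt hc x).continuousAt

lemma cumHaz_strictMono {lam : ℝ → ℝ} (hc : Continuous lam) (hpos : ∀ x, 0 < lam x) :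
    StrictMono (cumHaz lam) := by
  apply strictMono_of_deriv_pos
  intro x
  rw [(cumHaz_hasDerivAt hc x).deriv]
  exact hpos x

lemma cumHaz_zero (lam : ℝ → ℝ) : cumHaz lam 0 = 0 := intervalIntegral.integral_same

lemma cumHaz_clamp_atBot {lam : ℝ → ℝ} (hpos : (0:ℝ) < lam 0) :
    Tendsto (cumHaz (fun y => lam (max y 0))) atBot atBot := by
  have h : ∀ x : ℝ, x ≤ 0 → cumHaz (fun y => lam (max y 0)) x = x * lam 0 := by
    intro x hx
    unfold cumHaz
    rw [intervalIntegral.integral_congr (g := fun _ => lam 0) ?_]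
    · rw [intervalIntegral.integral_const]
      simp
    · intro u hu
      rw [uIcc_of_ge hx] at hu
      simp [max_eq_right hu.2]
  have h2 : Tendsto (fun x : ℝ => x * lam 0) atBot atBot :=
    Tendsto.atBot_mul_const hpos tendsto_id
  exact h2.congr' ((eventually_le_atBot (0:ℝ)).mono fun x hx => (h x hx).symm)

lemma expMeasure_Iic {b : ℝ} (hb : 0 ≤ b) :
    expMeasure 1 (Iic b) = ENNReal.ofReal (1 - Real.exp (-b)) := by
  have h : expMeasure 1 = volume.withDensity (exponentialPDF 1) := rfl
  rw [h, withDensity_apply _ measurableSet_Iic,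
    lintegral_exponentialPDF_eq_antiDeriv one_pos, if_pos hb, one_mul]

lemma expMeasure_Ioi {a : ℝ} (ha : 0 ≤ a) :
    expMeasure 1 (Ioi a) = ENNReal.ofReal (Real.exp (-a)) := by
  haveI : IsProbabilityMeasure (expMeasure 1) := isProbabilityMeasure_expMeasure one_pos
  have hle : Real.exp (-a) ≤ 1 := by
    rw [← Real.exp_zero]
    exact Real.exp_le_exp.2 (by linarith)
  rw [← compl_Iic, measure_compl measurableSet_Iic (measure_ne_top _ _), measure_univ,
    expMeasure_Iic ha, ← ENNReal.ofReal_one,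
    ← ENNReal.ofReal_sub _ (by linarith : (0:ℝ) ≤ 1 - Real.exp (-a))]
  norm_num

lemma expMeasure_Iio_zero : expMeasure 1 (Iio 0) = 0 := by
  have h : expMeasure 1 = volume.withDensity (exponentialPDF 1) := rfl
  rw [h, withDensity_apply _ measurableSet_Iio]
  exact lintegral_exponentialPDF_of_nonpos le_rfl

/-- cumulative incidence of the terminal event following the
intermediate event:
`P(T₂ ≤ t, T₁ < D₀) = ∫₀ᵗ exp(−Λ₀(s)−Λ⋆(s)) λ⋆(s) (1 − exp(−Λ₁(t,s))) ds`. -/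
theorem latent_terminal_after_intermediate_cif
    {Ω : Type*} [MeasurableSpace Ω] (P : Measure Ω) [IsProbabilityMeasure P]
    (lamS lam0 : ℝ → ℝ) (lam1 : ℝ → ℝ → ℝ)
    (hScont : ContinuousOn lamS (Set.Ici 0))
    (h0cont : ContinuousOn lam0 (Set.Ici 0))
    (h1cont : ContinuousOn (fun p : ℝ × ℝ => lam1 p.1 p.2) {p : ℝ × ℝ | 0 ≤ p.2 ∧ p.2 ≤ p.1})
    (hSpos : ∀ t ∈ Set.Ici (0:ℝ), 0 < lamS t)
    (h0pos : ∀ t ∈ Set.Ici (0:ℝ), 0 < lam0 t)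
    (h1nn : ∀ s t : ℝ, 0 ≤ s → s ≤ t → 0 ≤ lam1 t s)
    (hStop : Tendsto (cumHaz lamS) atTop atTop)
    (h0top : Tendsto (cumHaz lam0) atTop atTop)
    (h1mono : ∀ s : ℝ, 0 ≤ s → StrictMonoOn (fun t => cumHaz1 lam1 t s) (Set.Ici s))
    (h1top : ∀ s : ℝ, 0 ≤ s → Tendsto (fun t => cumHaz1 lam1 t s) atTop atTop)
    (E1 E2 E3 : Ω → ℝ)
    (hE1m : Measurable E1) (hE2m : Measurable E2) (hE3m : Measurable E3)
    (hindep : iIndepFun ![E1, E2, E3] P)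
    (hE1d : P.map E1 = expMeasure 1)
    (hE2d : P.map E2 = expMeasure 1)
    (hE3d : P.map E3 = expMeasure 1)
    (T1 D0 T2 : Ω → ℝ)
    (hT1 : ∀ ω, 0 ≤ T1 ω ∧ cumHaz lamS (T1 ω) = E1 ω)
    (hD0 : ∀ ω, 0 ≤ D0 ω ∧ cumHaz lam0 (D0 ω) = E2 ω)
    (hT2a : ∀ ω, D0 ω ≤ T1 ω → T2 ω = D0 ω)
    (hT2b : ∀ ω, T1 ω < D0 ω → T1 ω ≤ T2 ω ∧ cumHaz1 lam1 (T2 ω) (T1 ω) = E3 ω)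
    :
    ∀ t : ℝ, 0 ≤ t →
      P {ω | T2 ω ≤ t ∧ T1 ω < D0 ω} =
        ENNReal.ofReal
          (∫ s in (0:ℝ)..t, Real.exp (-cumHaz lam0 s - cumHaz lamS s) * lamS s *
            (1 - Real.exp (-cumHaz1 lam1 t s))) := by
  intro t ht
  classical
  haveI : IsProbabilityMeasure (expMeasure 1) := isProbabilityMeasure_expMeasure one_pos
  set μ : Measure ℝ := expMeasure 1 with hμdef
  -- clamped hazards
  set lS : ℝ → ℝ := fun x => lamS (max x 0) with hlSdef
  set l0 : ℝ → ℝ := fun x => lam0 (max x 0) with hl0def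
  have hlSc : Continuous lS := clamp_continuous hScont
  have hl0c : Continuous l0 := clamp_continuous h0cont
  have hlSpos : ∀ x, 0 < lS x := fun x => hSpos _ (Set.mem_Ici.2 (le_max_right x 0))
  have hl0pos : ∀ x, 0 < l0 x := fun x => h0pos _ (Set.mem_Ici.2 (le_max_right x 0))
  set LS := cumHaz lS with hLSdef
  set L0 := cumHaz l0 with hL0def
  have hLSeq : ∀ x : ℝ, 0 ≤ x → LS x = cumHaz lamS x := fun x hx => cumHaz_clamp_eq lamS hx
  have hL0eq : ∀ x : ℝ, 0 ≤ x → L0 x = cumHaz lam0 x := fun x hx => cumHaz_clamp_eq lam0 hx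
  have hLSsm : StrictMono LS := cumHaz_strictMono hlSc hlSpos
  have hL0sm : StrictMono L0 := cumHaz_strictMono hl0c hl0pos
  have hLS0 : LS 0 = 0 := cumHaz_zero lS
  have hL00 : L0 0 = 0 := cumHaz_zero l0
  have hL0cont : Continuous L0 := cumHaz_continuous hl0c
  have hL0nn : ∀ x : ℝ, 0 ≤ x → 0 ≤ L0 x := by
    intro x hx
    have := hL0sm.monotone hx
    rwa [hL00] at this
  have hLStop : Tendsto LS atTop atTop :=
    hStop.congr' ((eventually_ge_atTop (0:ℝ)).mono fun x hx => (hLSeq x hx).symm)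
  have hLSbot : Tendsto LS atBot atBot := cumHaz_clamp_atBot (hSpos 0 (Set.mem_Ici.2 le_rfl))
  have hLSsurj : Function.Surjective LS :=
    Continuous.surjective (cumHaz_continuous hlSc) hLStop hLSbot
  set e := StrictMono.orderIsoOfSurjective LS hLSsm hLSsurj with hedef
  set gi : ℝ → ℝ := fun x => e.symm x with hgidef
  have hgic : Continuous gi := e.symm.continuous
  have hgiLS : ∀ s, gi (LS s) = s := fun s =>
    StrictMono.orderIsoOfSurjective_symm_apply_self LS hLSsm hLSsurj s
  have hgimono : Monotone gi := e.symm.monotone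
  have hgi0 : gi 0 = 0 := by nth_rewrite 1 [← hLS0]; exact hgiLS 0
  have hginn : ∀ x : ℝ, 0 ≤ x → 0 ≤ gi x := by
    intro x hx
    have := hgimono hx
    rwa [hgi0] at this
  have hgile : ∀ x : ℝ, x ≤ LS t → gi x ≤ t := by
    intro x hx
    have := hgimono hx
    rwa [hgiLS] at this
  -- clamped joint hazard
  set l1 : ℝ → ℝ → ℝ := fun u s => lam1 (max u (max 0 (min s u))) (max 0 (min s u)) with hl1def
  have hl1c : Continuous (fun p : ℝ × ℝ => l1 p.1 p.2) := by
    have hr : Continuous (fun p : ℝ × ℝ =>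
        ((max p.1 (max 0 (min p.2 p.1)), max 0 (min p.2 p.1)) : ℝ × ℝ)) := by fun_prop
    exact h1cont.comp_continuous hr (fun p => ⟨le_max_left _ _, le_max_right _ _⟩)
  have hl1nn : ∀ u s : ℝ, 0 ≤ l1 u s := fun u s =>
    h1nn _ _ (le_max_left _ _) (le_max_right _ _)
  have hl1eq : ∀ u s : ℝ, 0 ≤ s → s ≤ u → l1 u s = lam1 u s := by
    intro u s h0s hsu
    simp only [hl1def]
    rw [min_eq_left hsu, max_eq_right h0s, max_eq_left hsu]
  set B : ℝ → ℝ := fun s => ∫ u in s..t, l1 u s with hBdef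
  have hBc : Continuous B := by
    have h := intervalIntegral.continuous_parametric_intervalIntegral_of_continuous
      (μ := volume) (f := fun s u => l1 u s) (a₀ := t)
      (hl1c.comp continuous_swap) (continuous_id)
    have hB2 : B = fun s => -∫ u in t..s, l1 u s := by
      funext s
      rw [hBdef]
      exact intervalIntegral.integral_symm t s
    rw [hB2]
    exact h.neg
  have hBnn : ∀ s, s ≤ t → 0 ≤ B s := fun s hs =>
    intervalIntegral.integral_nonneg hs (fun u _ => hl1nn u s)
  have hBeq : ∀ s, 0 ≤ s → s ≤ t → B s = cumHaz1 lam1 t s := by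
    intro s h0s hst
    show (∫ u in s..t, l1 u s) = ∫ u in s..t, lam1 u s
    refine intervalIntegral.integral_congr fun u hu => ?_
    rw [uIcc_of_le hst] at hu
    exact hl1eq u s h0s hu.1
  -- the event as a preimage
  set c := LS t with hcdef
  set S : Set (ℝ × ℝ × ℝ) :=
    {p | p.1 ≤ c ∧ L0 (gi p.1) < p.2.1 ∧ p.2.2 ≤ B (gi p.1)} with hSdef
  have hevent : {ω | T2 ω ≤ t ∧ T1 ω < D0 ω} = (fun ω => (E1 ω, E2 ω, E3 ω)) ⁻¹' S := by
    ext ω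
    obtain ⟨hT1nn, hT1eq⟩ := hT1 ω
    obtain ⟨hD0nn, hD0eq⟩ := hD0 ω
    have hE1eq : LS (T1 ω) = E1 ω := by rw [hLSeq _ hT1nn, hT1eq]
    have hE2eq : L0 (D0 ω) = E2 ω := by rw [hL0eq _ hD0nn, hD0eq]
    have hgiE1 : gi (E1 ω) = T1 ω := by rw [← hE1eq, hgiLS]
    simp only [mem_setOf_eq, mem_preimage, hSdef, hgiE1]
    constructor
    · rintro ⟨h2t, h1d⟩
      obtain ⟨h12, hc1⟩ := hT2b ω h1d
      have h1t : T1 ω ≤ t := le_trans h12 h2t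
      refine ⟨?_, ?_, ?_⟩
      · rw [← hE1eq]
        exact hLSsm.le_iff_le.2 h1t
      · rw [← hE2eq]
        exact hL0sm h1d
      · rw [← hc1, hBeq _ hT1nn h1t]
        exact (h1mono _ hT1nn).monotoneOn (Set.mem_Ici.2 h12) (Set.mem_Ici.2 h1t) h2t
    · rintro ⟨hx1, hx2, hx3⟩
      have h1t : T1 ω ≤ t := hLSsm.le_iff_le.1 (by rwa [hE1eq])
      have h1d : T1 ω < D0 ω := hL0sm.lt_iff_lt.1 (by rwa [hE2eq])
      obtain ⟨h12, hc1⟩ := hT2b ω h1d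
      refine ⟨?_, h1d⟩
      have hle := (h1mono _ hT1nn).le_iff_le (Set.mem_Ici.2 h12) (Set.mem_Ici.2 h1t)
      apply hle.1
      show cumHaz1 lam1 (T2 ω) (T1 ω) ≤ cumHaz1 lam1 t (T1 ω)
      rw [hc1, ← hBeq _ hT1nn h1t]
      exact hx3
  -- measurability of S
  have hS_meas : MeasurableSet S := by
    have m1 : MeasurableSet {p : ℝ × ℝ × ℝ | p.1 ≤ c} :=
      measurableSet_le measurable_fst measurable_const
    have m2 : MeasurableSet {p : ℝ × ℝ × ℝ | L0 (gi p.1) < p.2.1} :=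
      measurableSet_lt (((hL0cont.comp hgic).measurable).comp measurable_fst)
        (measurable_fst.comp measurable_snd)
    have m3 : MeasurableSet {p : ℝ × ℝ × ℝ | p.2.2 ≤ B (gi p.1)} :=
      measurableSet_le (measurable_snd.comp measurable_snd)
        (((hBc.comp hgic).measurable).comp measurable_fst)
    exact (m1.inter (m2.inter m3))
  -- joint law
  have hmeas_all : ∀ i, Measurable (![E1, E2, E3] i) := by
    intro i; fin_cases i <;> simpa
  have h23 : IndepFun E2 E3 P := by
    simpa using hindep.indepFun (show (1 : Fin 3) ≠ 2 by decide)
  have h123 : IndepFun E1 (fun ω => (E2 ω, E3 ω)) P := by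
    simpa using (hindep.indepFun_prodMk hmeas_all 1 2 0 (by decide) (by decide)).symm
  have hmap23 : P.map (fun ω => (E2 ω, E3 ω)) = μ.prod μ := by
    have h := (indepFun_iff_map_prod_eq_prod_map_map hE2m.aemeasurable hE3m.aemeasurable).1 h23
    rw [hE2d, hE3d] at h
    exact h
  have hmapall : P.map (fun ω => (E1 ω, E2 ω, E3 ω)) = μ.prod (μ.prod μ) := by
    have h := (indepFun_iff_map_prod_eq_prod_map_map hE1m.aemeasurable
      (hE2m.prodMk hE3m).aemeasurable).1 h123
    rw [hE1d, hmap23] at h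
    exact h
  have hPev : P {ω | T2 ω ≤ t ∧ T1 ω < D0 ω} = (μ.prod (μ.prod μ)) S := by
    rw [hevent, ← Measure.map_apply (hE1m.prodMk (hE2m.prodMk hE3m)) hS_meas, hmapall]
  -- slices
  have hslice : ∀ x : ℝ, Prod.mk x ⁻¹' S =
      if x ≤ c then Ioi (L0 (gi x)) ×ˢ Iic (B (gi x)) else (∅ : Set (ℝ × ℝ)) := by
    intro x
    split_ifs with hx
    · ext yz
      simp [hSdef, hx, and_assoc]
    · ext yz
      simp [hSdef, hx]
  set φ : ℝ → ℝ := fun x => Real.exp (-L0 (gi x)) * (1 - Real.exp (-B (gi x))) with hφdef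
  have hφc : Continuous φ := by
    apply Continuous.mul
    · exact ((hL0cont.comp hgic).neg).rexp
    · exact continuous_const.sub ((hBc.comp hgic).neg).rexp
  have key : ∀ x : ℝ, 0 ≤ x → (μ.prod μ) (Prod.mk x ⁻¹' S) =
      Set.indicator (Icc 0 c) (fun y => ENNReal.ofReal (φ y)) x := by
    intro x hx
    rw [hslice x]
    split_ifs with hxc
    · rw [Measure.prod_prod, hμdef]
      rw [expMeasure_Ioi (hL0nn _ (hginn x hx)),
        expMeasure_Iic (hBnn _ (hgile x hxc)), Set.indicator_of_mem (Set.mem_Icc.2 ⟨hx, hxc⟩),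
        ← ENNReal.ofReal_mul (Real.exp_nonneg _)]
    · rw [measure_empty, Set.indicator_of_notMem (fun hmem => hxc hmem.2)]
  have hae : ∀ᵐ x ∂μ, 0 ≤ x := by
    rw [ae_iff]
    have hset : {x : ℝ | ¬ 0 ≤ x} = Iio 0 := by ext x; simp [not_le]
    rw [hset, hμdef]
    exact expMeasure_Iio_zero
  have hlint : ∫⁻ x, (μ.prod μ) (Prod.mk x ⁻¹' S) ∂μ
      = ∫⁻ x in Icc 0 c, ENNReal.ofReal (φ x) ∂μ := by
    rw [← lintegral_indicator measurableSet_Icc _]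
    exact lintegral_congr_ae (hae.mono fun x hx => key x hx)
  have hpdfm : Measurable (exponentialPDF 1) := (measurable_exponentialPDFReal 1).ennreal_ofReal
  have hstep : ∫⁻ x in Icc 0 c, ENNReal.ofReal (φ x) ∂μ
      = ∫⁻ x in Icc 0 c, ENNReal.ofReal (Real.exp (-x) * φ x) ∂volume := by
    have hμd : μ = volume.withDensity (exponentialPDF 1) := rfl
    rw [hμd, restrict_withDensity measurableSet_Icc,
      lintegral_withDensity_eq_lintegral_mul _ hpdfm hφc.measurable.ennreal_ofReal]
    refine setLIntegral_congr_fun measurableSet_Icc (fun x hx => ?_)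
    simp only [Pi.mul_apply]
    rw [exponentialPDF_of_nonneg hx.1, ← ENNReal.ofReal_mul (by positivity)]
    norm_num
  have hψc : Continuous (fun x => Real.exp (-x) * φ x) :=
    (continuous_neg.rexp).mul hφc
  have hofReal : ∫⁻ x in Icc 0 c, ENNReal.ofReal (Real.exp (-x) * φ x) ∂volume
      = ENNReal.ofReal (∫ x in Icc 0 c, Real.exp (-x) * φ x) := by
    rw [← ofReal_integral_eq_lintegral_ofReal (hψc.integrableOn_Icc)]
    refine (ae_restrict_iff' measurableSet_Icc).2 (ae_of_all _ fun x hx => ?_)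
    have h1 : 0 ≤ B (gi x) := hBnn _ (hgile x hx.2)
    have h2 : Real.exp (-B (gi x)) ≤ 1 := by
      rw [← Real.exp_zero]
      exact Real.exp_le_exp.2 (by linarith)
    simp only [hφdef]
    have : (0:ℝ) ≤ 1 - Real.exp (-B (gi x)) := by linarith
    positivity
  have himg : LS '' Icc 0 t = Icc 0 c := by
    have h := e.image_Icc 0 t
    rw [StrictMono.coe_orderIsoOfSurjective] at h
    rw [h, hLS0]
  have hchg : ∫ x in Icc 0 c, Real.exp (-x) * φ x
      = ∫ s in Icc 0 t, |lS s| • (Real.exp (-(LS s)) * φ (LS s)) := by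
    rw [← himg]
    exact integral_image_eq_integral_abs_deriv_smul measurableSet_Icc
      (fun x _ => (cumHaz_hasDerivAt hlSc x).hasDerivWithinAt) hLSsm.injective.injOn _
  have hfinal : ∫ s in Icc 0 t, |lS s| • (Real.exp (-(LS s)) * φ (LS s))
      = ∫ s in (0:ℝ)..t, Real.exp (-cumHaz lam0 s - cumHaz lamS s) * lamS s *
          (1 - Real.exp (-cumHaz1 lam1 t s)) := by
    rw [integral_Icc_eq_integral_Ioc, ← intervalIntegral.integral_of_le ht]
    refine intervalIntegral.integral_congr fun s hs => ?_
    rw [uIcc_of_le ht] at hs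
    obtain ⟨h0s, hst⟩ := hs
    simp only [hφdef, hgiLS s, smul_eq_mul]
    rw [hLSeq s h0s, hL0eq s h0s, hBeq s h0s hst, abs_of_pos (hlSpos s)]
    have hlSs : lS s = lamS s := by simp [hlSdef, max_eq_left h0s]
    rw [hlSs,
      show -cumHaz lam0 s - cumHaz lamS s = -cumHaz lam0 s + -cumHaz lamS s from by ring,
      Real.exp_add]
    ring
  rw [hPev, Measure.prod_apply hS_meas, hlint, hstep, hofReal, hchg, hfinal]
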